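/- Let K be a field of characteristic zero, and let (a, b, c) and (m, n, k) be two points of the Fricke surface x² + y² + z² = 3xyz over K with (a − m)(b − n)(c − k) ≠ 0. Then the point (x, y, z) defined by x = (3(ank + bcm) − 2(am + bn + ck))/(3(b − n)(c − k)), y = (3(bmk + acn) − 2(am + bn + ck))/(3(a − m)(c − k)), z = (3(cmn + abk) − 2(am + bn + ck))/(3(a − m)(b − n)) also satisfies x² + y² + z² = 3xyz. -/

import Mathlib

set_option maxHeartbeats 1600000 in
private lemma fricke_aux {K : Type*} [Field K] (A B C t : K) (ht : t ≠ 0)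
    (h : (A^2 + B^2 + C^2) * t = 3*A*B*C) :
    (A/t)^2 + (B/t)^2 + (C/t)^2 = 3*(A/t)*(B/t)*(C/t) := by
  field_simp
  linear_combination h

set_option maxHeartbeats 1600000 in
theorem fricke_composition {K : Type*} [Field K] [CharZero K]
    (a b c m n k : K)
    (h1 : a^2 + b^2 + c^2 = 3*a*b*c) (h2 : m^2 + n^2 + k^2 = 3*m*n*k)
    (hne : (a - m)*(b - n)*(c - k) ≠ 0) :
    ((3*(a*n*k + b*c*m) - 2*(a*m + b*n + c*k))/(3*(b - n)*(c - k)))^2 +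
    ((3*(b*m*k + a*c*n) - 2*(a*m + b*n + c*k))/(3*(a - m)*(c - k)))^2 +
    ((3*(c*m*n + a*b*k) - 2*(a*m + b*n + c*k))/(3*(a - m)*(b - n)))^2 =
    3 * ((3*(a*n*k + b*c*m) - 2*(a*m + b*n + c*k))/(3*(b - n)*(c - k))) *
        ((3*(b*m*k + a*c*n) - 2*(a*m + b*n + c*k))/(3*(a - m)*(c - k))) *
        ((3*(c*m*n + a*b*k) - 2*(a*m + b*n + c*k))/(3*(a - m)*(b - n))) := by
  have ha : a - m ≠ 0 := fun h => hne (by rw [h]; ring)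
  have hb : b - n ≠ 0 := fun h => hne (by rw [h]; ring)
  have hc : c - k ≠ 0 := fun h => hne (by rw [h]; ring)
  have ht : 3*((a - m)*(b - n)*(c - k)) ≠ 0 := by
    refine mul_ne_zero (by norm_num) hne
  have hx : (3*(a*n*k + b*c*m) - 2*(a*m + b*n + c*k))/(3*(b - n)*(c - k)) =
      ((3*(a*n*k + b*c*m) - 2*(a*m + b*n + c*k))*(a - m))/(3*((a - m)*(b - n)*(c - k))) := by
    rw [div_eq_div_iff (by exact mul_ne_zero (mul_ne_zero (by norm_num) hb) hc) ht]; ring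
  have hy : (3*(b*m*k + a*c*n) - 2*(a*m + b*n + c*k))/(3*(a - m)*(c - k)) =
      ((3*(b*m*k + a*c*n) - 2*(a*m + b*n + c*k))*(b - n))/(3*((a - m)*(b - n)*(c - k))) := by
    rw [div_eq_div_iff (by exact mul_ne_zero (mul_ne_zero (by norm_num) ha) hc) ht]; ring
  have hz : (3*(c*m*n + a*b*k) - 2*(a*m + b*n + c*k))/(3*(a - m)*(b - n)) =
      ((3*(c*m*n + a*b*k) - 2*(a*m + b*n + c*k))*(c - k))/(3*((a - m)*(b - n)*(c - k))) := by
    rw [div_eq_div_iff (by exact mul_ne_zero (mul_ne_zero (by norm_num) ha) hb) ht]; ring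
  rw [hx, hy, hz]
  refine fricke_aux _ _ _ _ ht ?_
  linear_combination ((12)*a^3*b*c*m^2 + (-36)*a^3*b*c*m*n*k + (27)*a^3*b*c*n^2*k^2 + (-12)*a^3*b*m^2*k + (36)*a^3*b*m*n*k^2 + (-27)*a^3*b*n^2*k^3 + (-12)*a^3*c*m^2*n + (36)*a^3*c*m*n^2*k + (-27)*a^3*c*n^3*k^2 + (12)*a^3*m^2*n*k + (-36)*a^3*m*n^2*k^2 + (27)*a^3*n^3*k^3 + (-36)*a^2*b^2*c*m^2*k + (54)*a^2*b^2*c*m*n*k^2 + (24)*a^2*b^2*c*m*n + (-36)*a^2*b^2*c*n^2*k + (36)*a^2*b^2*m^2*k^2 + (-54)*a^2*b^2*m*n*k^3 + (-24)*a^2*b^2*m*n*k + (36)*a^2*b^2*n^2*k^2 + (-36)*a^2*b*c^2*m^2*n + (54)*a^2*b*c^2*m*n^2*k + (24)*a^2*b*c^2*m*k + (-36)*a^2*b*c^2*n*k^2 + (-12)*a^2*b*c*m^3 + (144)*a^2*b*c*m^2*n*k + (-189)*a^2*b*c*m*n^2*k^2 + (-24)*a^2*b*c*m*n^2 + (-24)*a^2*b*c*m*k^2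 + (36)*a^2*b*c*n^3*k + (36)*a^2*b*c*n*k^3 + (12)*a^2*b*m^3*k + (-108)*a^2*b*m^2*n*k^2 + (135)*a^2*b*m*n^2*k^3 + (24)*a^2*b*m*n^2*k + (-36)*a^2*b*n^3*k^2 + (36)*a^2*c^2*m^2*n^2 + (-54)*a^2*c^2*m*n^3*k + (-24)*a^2*c^2*m*n*k + (36)*a^2*c^2*n^2*k^2 + (12)*a^2*c*m^3*n + (-108)*a^2*c*m^2*n^2*k + (135)*a^2*c*m*n^3*k^2 + (24)*a^2*c*m*n*k^2 + (-36)*a^2*c*n^2*k^3 + (-12)*a^2*m^3*n*k + (72)*a^2*m^2*n^2*k^2 + (-81)*a^2*m*n^3*k^3 + (27)*a*b^3*c^3*m^2 + (-81)*a*b^3*c^3*m*n*k + (27)*a*b^3*c^3*n^2 + (27)*a*b^3*c^3*k^2 + (-81)*a*b^3*c^2*m^2*k + (243)*a*b^3*c^2*m*n*k^2 + (-81)*a*b^3*c^2*n^2*k + (-81)*a*b^3*c^2*k^3 + (108)*a*b^3*c*m^2*k^2 + (-243)*a*b^3*c*m*n*k^3 + (-36)*a*b^3*c*m*n*k + (81)*a*b^3*c*n^2*k^2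 + (12)*a*b^3*c*n^2 + (81)*a*b^3*c*k^4 + (-54)*a*b^3*m^2*k^3 + (81)*a*b^3*m*n*k^4 + (36)*a*b^3*m*n*k^2 + (-27)*a*b^3*n^2*k^3 + (-12)*a*b^3*n^2*k + (-27)*a*b^3*k^5 + (-81)*a*b^2*c^3*m^2*n + (243)*a*b^2*c^3*m*n^2*k + (-81)*a*b^2*c^3*n^3 + (-81)*a*b^2*c^3*n*k^2 + (36)*a*b^2*c^2*m^3 + (135)*a*b^2*c^2*m^2*n*k + (-567)*a*b^2*c^2*m*n^2*k^2 + (189)*a*b^2*c^2*n^3*k + (189)*a*b^2*c^2*n*k^3 + (24)*a*b^2*c^2*n*k + (-36)*a*b^2*c*m^3*k + (-108)*a*b^2*c*m^2*n*k^2 + (-24)*a*b^2*c*m^2*n + (405)*a*b^2*c*m*n^2*k^3 + (72)*a*b^2*c*m*n^2*k + (-36)*a*b^2*c*m*k^3 + (-135)*a*b^2*c*n^3*k^2 + (-12)*a*b^2*c*n^3 + (-135)*a*b^2*c*n*k^4 + (-24)*a*b^2*c*n*k^2 + (54)*a*b^2*m^2*n*k^3 + (24)*a*b^2*m^2*n*k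 + (-81)*a*b^2*m*n^2*k^4 + (-72)*a*b^2*m*n^2*k^2 + (36)*a*b^2*m*k^4 + (27)*a*b^2*n^3*k^3 + (12)*a*b^2*n^3*k + (27)*a*b^2*n*k^5 + (108)*a*b*c^3*m^2*n^2 + (-243)*a*b*c^3*m*n^3*k + (-36)*a*b*c^3*m*n*k + (81)*a*b*c^3*n^4 + (81)*a*b*c^3*n^2*k^2 + (12)*a*b*c^3*k^2 + (-36)*a*b*c^2*m^3*n + (-108)*a*b*c^2*m^2*n^2*k + (-24)*a*b*c^2*m^2*k + (405)*a*b*c^2*m*n^3*k^2 + (-36)*a*b*c^2*m*n^3 + (72)*a*b*c^2*m*n*k^2 + (-135)*a*b*c^2*n^4*k + (-135)*a*b*c^2*n^2*k^3 + (-24)*a*b*c^2*n^2*k + (-12)*a*b*c^2*k^3 + (12)*a*b*c*m^4 + (-36)*a*b*c*m^3*n*k + (81)*a*b*c*m^2*n^2*k^2 + (36)*a*b*c*m^2*n^2 + (36)*a*b*c*m^2*k^2 + (-162)*a*b*c*m*n^3*k^3 + (54)*a*b*c*n^4*k^2 + (54)*a*b*c*n^2*k^4 + (24)*a*b*c*n^2*k^2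 + (-12)*a*b*m^4*k + (72)*a*b*m^3*n*k^2 + (-81)*a*b*m^2*n^2*k^3 + (-36)*a*b*m^2*n^2*k + (-12)*a*b*m^2*k^3 + (36)*a*b*m*n^3*k^2 + (-36)*a*b*m*n*k^4 + (-54)*a*c^3*m^2*n^3 + (81)*a*c^3*m*n^4*k + (36)*a*c^3*m*n^2*k + (-27)*a*c^3*n^5 + (-27)*a*c^3*n^3*k^2 + (-12)*a*c^3*n*k^2 + (54)*a*c^2*m^2*n^3*k + (24)*a*c^2*m^2*n*k + (-81)*a*c^2*m*n^4*k^2 + (36)*a*c^2*m*n^4 + (-72)*a*c^2*m*n^2*k^2 + (27)*a*c^2*n^5*k + (27)*a*c^2*n^3*k^3 + (12)*a*c^2*n*k^3 + (-12)*a*c*m^4*n + (72)*a*c*m^3*n^2*k + (-81)*a*c*m^2*n^3*k^2 + (-12)*a*c*m^2*n^3 + (-36)*a*c*m^2*n*k^2 + (-36)*a*c*m*n^4*k + (36)*a*c*m*n^2*k^3 + (12)*a*m^4*n*k + (-72)*a*m^3*n^2*k^2 + (81)*a*m^2*n^3*k^3 + (12)*a*m^2*n^3*k + (12)*a*m^2*n*k^3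 + (81)*b^4*c^4*m^2 + (-243)*b^4*c^4*m*n*k + (81)*b^4*c^4*n^2 + (81)*b^4*c^4*k^2 + (-243)*b^4*c^3*m^2*k + (729)*b^4*c^3*m*n*k^2 + (-243)*b^4*c^3*n^2*k + (-243)*b^4*c^3*k^3 + (243)*b^4*c^2*m^2*k^2 + (-729)*b^4*c^2*m*n*k^3 + (243)*b^4*c^2*n^2*k^2 + (243)*b^4*c^2*k^4 + (-81)*b^4*c*m^2*k^3 + (243)*b^4*c*m*n*k^4 + (-81)*b^4*c*n^2*k^3 + (-81)*b^4*c*k^5 + (-243)*b^3*c^4*m^2*n + (729)*b^3*c^4*m*n^2*k + (-243)*b^3*c^4*n^3 + (-243)*b^3*c^4*n*k^2 + (27)*b^3*c^3*m^3 + (486)*b^3*c^3*m^2*n*k + (-1701)*b^3*c^3*m*n^2*k^2 + (27)*b^3*c^3*m*n^2 + (27)*b^3*c^3*m*k^2 + (567)*b^3*c^3*n^3*k + (567)*b^3*c^3*n*k^3 + (-27)*b^3*c^2*m^3*k + (-324)*b^3*c^2*m^2*n*k^2 + (36)*b^3*c^2*m^2*n + (1215)*b^3*c^2*m*n^2*k^3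 + (-135)*b^3*c^2*m*n^2*k + (-27)*b^3*c^2*m*k^3 + (-405)*b^3*c^2*n^3*k^2 + (36)*b^3*c^2*n^3 + (-405)*b^3*c^2*n*k^4 + (36)*b^3*c^2*n*k^2 + (-54)*b^3*c*m^3*k^2 + (162)*b^3*c*m^2*n*k^3 + (-36)*b^3*c*m^2*n*k + (-243)*b^3*c*m*n^2*k^4 + (189)*b^3*c*m*n^2*k^2 + (-12)*b^3*c*m*n^2 + (-27)*b^3*c*m*k^4 + (81)*b^3*c*n^3*k^3 + (-72)*b^3*c*n^3*k + (81)*b^3*c*n*k^5 + (-72)*b^3*c*n*k^3 + (54)*b^3*m^3*k^3 + (-81)*b^3*m^2*n*k^4 + (-81)*b^3*m*n^2*k^3 + (12)*b^3*m*n^2*k + (27)*b^3*m*k^5 + (36)*b^3*n^3*k^2 + (36)*b^3*n*k^4 + (243)*b^2*c^4*m^2*n^2 + (-729)*b^2*c^4*m*n^3*k + (243)*b^2*c^4*n^4 + (243)*b^2*c^4*n^2*k^2 + (-27)*b^2*c^3*m^3*n + (-324)*b^2*c^3*m^2*n^2*k + (36)*b^2*c^3*m^2*k + (1215)*b^2*c^3*m*n^3*k^2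 + (-27)*b^2*c^3*m*n^3 + (-135)*b^2*c^3*m*n*k^2 + (-405)*b^2*c^3*n^4*k + (-405)*b^2*c^3*n^2*k^3 + (36)*b^2*c^3*n^2*k + (36)*b^2*c^3*k^3 + (-36)*b^2*c^2*m^4 + (27)*b^2*c^2*m^3*n*k + (243)*b^2*c^2*m^2*n^2*k^2 + (-72)*b^2*c^2*m^2*n^2 + (-72)*b^2*c^2*m^2*k^2 + (-486)*b^2*c^2*m*n^3*k^3 + (189)*b^2*c^2*m*n^3*k + (189)*b^2*c^2*m*n*k^3 + (-24)*b^2*c^2*m*n*k + (162)*b^2*c^2*n^4*k^2 + (-72)*b^2*c^2*n^4 + (162)*b^2*c^2*n^2*k^4 + (-144)*b^2*c^2*n^2*k^2 + (-72)*b^2*c^2*k^4 + (72)*b^2*c*m^4*k + (24)*b^2*c*m^3*n + (-243)*b^2*c*m^2*n^2*k^3 + (72)*b^2*c*m^2*k^3 + (-243)*b^2*c*m*n^3*k^2 + (36)*b^2*c*m*n^3 + (-27)*b^2*c*m*n*k^4 + (48)*b^2*c*m*n*k^2 + (108)*b^2*c*n^4*k + (144)*b^2*c*n^2*k^3 + (36)*b^2*c*k^5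 + (-36)*b^2*m^4*k^2 + (-24)*b^2*m^3*n*k + (81)*b^2*m^2*n^2*k^4 + (72)*b^2*m^2*n^2*k^2 + (-36)*b^2*m^2*k^4 + (81)*b^2*m*n^3*k^3 + (-36)*b^2*m*n^3*k + (-27)*b^2*m*n*k^5 + (-24)*b^2*m*n*k^3 + (-36)*b^2*n^4*k^2 + (-36)*b^2*n^2*k^4 + (-81)*b*c^4*m^2*n^3 + (243)*b*c^4*m*n^4*k + (-81)*b*c^4*n^5 + (-81)*b*c^4*n^3*k^2 + (-54)*b*c^3*m^3*n^2 + (162)*b*c^3*m^2*n^3*k + (-36)*b*c^3*m^2*n*k + (-243)*b*c^3*m*n^4*k^2 + (-27)*b*c^3*m*n^4 + (189)*b*c^3*m*n^2*k^2 + (-12)*b*c^3*m*k^2 + (81)*b*c^3*n^5*k + (81)*b*c^3*n^3*k^3 + (-72)*b*c^3*n^3*k + (-72)*b*c^3*n*k^3 + (72)*b*c^2*m^4*n + (24)*b*c^2*m^3*k + (-243)*b*c^2*m^2*n^3*k^2 + (72)*b*c^2*m^2*n^3 + (-27)*b*c^2*m*n^4*k + (-243)*b*c^2*m*n^2*k^3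 + (48)*b*c^2*m*n^2*k + (36)*b*c^2*m*k^3 + (36)*b*c^2*n^5 + (144)*b*c^2*n^3*k^2 + (108)*b*c^2*n*k^4 + (-12)*b*c*m^5 + (-72)*b*c*m^4*n*k + (81)*b*c*m^3*n^2*k^2 + (-36)*b*c*m^3*n^2 + (-36)*b*c*m^3*k^2 + (162)*b*c*m^2*n^3*k^3 + (54)*b*c*m*n^4*k^2 + (-24)*b*c*m*n^4 + (54)*b*c*m*n^2*k^4 + (-72)*b*c*m*n^2*k^2 + (-24)*b*c*m*k^4 + (-36)*b*c*n^5*k + (-72)*b*c*n^3*k^3 + (-36)*b*c*n*k^5 + (12)*b*m^5*k + (-27)*b*m^3*n^2*k^3 + (36)*b*m^3*n^2*k + (12)*b*m^3*k^3 + (-72)*b*m^2*n^3*k^2 + (36)*b*m^2*n*k^4 + (24)*b*m*n^4*k + (24)*b*m*n^2*k^3 + (54)*c^3*m^3*n^3 + (-81)*c^3*m^2*n^4*k + (27)*c^3*m*n^5 + (-81)*c^3*m*n^3*k^2 + (12)*c^3*m*n*k^2 + (36)*c^3*n^4*k + (36)*c^3*n^2*k^3 + (-36)*c^2*m^4*n^2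 + (-24)*c^2*m^3*n*k + (81)*c^2*m^2*n^4*k^2 + (-36)*c^2*m^2*n^4 + (72)*c^2*m^2*n^2*k^2 + (-27)*c^2*m*n^5*k + (81)*c^2*m*n^3*k^3 + (-24)*c^2*m*n^3*k + (-36)*c^2*m*n*k^3 + (-36)*c^2*n^4*k^2 + (-36)*c^2*n^2*k^4 + (12)*c*m^5*n + (-27)*c*m^3*n^3*k^2 + (12)*c*m^3*n^3 + (36)*c*m^3*n*k^2 + (36)*c*m^2*n^4*k + (-72)*c*m^2*n^2*k^3 + (24)*c*m*n^3*k^2 + (24)*c*m*n*k^4 + (-12)*m^5*n*k + (36)*m^4*n^2*k^2 + (-27)*m^3*n^3*k^3 + (-12)*m^3*n^3*k + (-12)*m^3*n*k^3) * h1 + ((243)*a*b^5*c^5 + (-729)*a*b^5*c^4*k + (729)*a*b^5*c^3*k^2 + (-27)*a*b^5*c^3 + (-243)*a*b^5*c^2*k^3 + (81)*a*b^5*c^2*k + (-81)*a*b^5*c*k^2 + (27)*a*b^5*k^3 + (-729)*a*b^4*c^5*n + (81)*a*b^4*c^4*m + (1701)*a*b^4*c^4*n*k + (-81)*a*b^4*c^3*m*k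 + (-1215)*a*b^4*c^3*n*k^2 + (189)*a*b^4*c^3*n + (-81)*a*b^4*c^2*m*k^2 + (-36)*a*b^4*c^2*m + (243)*a*b^4*c^2*n*k^3 + (-405)*a*b^4*c^2*n*k + (81)*a*b^4*c*m*k^3 + (72)*a*b^4*c*m*k + (243)*a*b^4*c*n*k^2 + (-36)*a*b^4*m*k^2 + (-27)*a*b^4*n*k^3 + (729)*a*b^3*c^5*n^2 + (-27)*a*b^3*c^5 + (-81)*a*b^3*c^4*m*n + (-1215)*a*b^3*c^4*n^2*k + (189)*a*b^3*c^4*k + (-27)*a*b^3*c^3*m^2 + (-81)*a*b^3*c^3*m*n*k + (486)*a*b^3*c^3*n^2*k^2 + (-297)*a*b^3*c^3*n^2 + (-297)*a*b^3*c^3*k^2 + (81)*a*b^3*c^2*m^2*k + (243)*a*b^3*c^2*m*n*k^2 + (72)*a*b^3*c^2*m*n + (459)*a*b^3*c^2*n^2*k + (135)*a*b^3*c^2*k^3 + (-54)*a*b^3*c*m^2*k^2 + (-12)*a*b^3*c*m^2 + (-81)*a*b^3*c*m*n*k^3 + (-72)*a*b^3*c*m*n*k + (-162)*a*b^3*c*n^2*k^2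 + (12)*a*b^3*c*n^2 + (12)*a*b^3*m^2*k + (-12)*a*b^3*n^2*k + (-243)*a*b^2*c^5*n^3 + (81)*a*b^2*c^5*n + (-81)*a*b^2*c^4*m*n^2 + (-36)*a*b^2*c^4*m + (243)*a*b^2*c^4*n^3*k + (-405)*a*b^2*c^4*n*k + (81)*a*b^2*c^3*m^2*n + (243)*a*b^2*c^3*m*n^2*k + (72)*a*b^2*c^3*m*k + (135)*a*b^2*c^3*n^3 + (459)*a*b^2*c^3*n*k^2 + (-135)*a*b^2*c^2*m^2*n*k + (-162)*a*b^2*c^2*m*n^2*k^2 + (-135)*a*b^2*c^2*n^3*k + (-135)*a*b^2*c^2*n*k^3 + (24)*a*b^2*c^2*n*k + (54)*a*b^2*c*m^2*n*k^2 + (-12)*a*b^2*c*m^2*n + (-36)*a*b^2*c*m*n^2*k + (-36)*a*b^2*c*m*k^3 + (-12)*a*b^2*c*n^3 + (-24)*a*b^2*c*n*k^2 + (12)*a*b^2*m^2*n*k + (36)*a*b^2*m*n^2*k^2 + (12)*a*b^2*n^3*k + (-81)*a*b*c^5*n^2 + (81)*a*b*c^4*m*n^3 + (72)*a*b*c^4*m*n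 + (243)*a*b*c^4*n^2*k + (-54)*a*b*c^3*m^2*n^2 + (-12)*a*b*c^3*m^2 + (-81)*a*b*c^3*m*n^3*k + (-72)*a*b*c^3*m*n*k + (-162)*a*b*c^3*n^2*k^2 + (12)*a*b*c^3*k^2 + (54)*a*b*c^2*m^2*n^2*k + (-12)*a*b*c^2*m^2*k + (-36)*a*b*c^2*m*n^3 + (-36)*a*b*c^2*m*n*k^2 + (-24)*a*b*c^2*n^2*k + (-12)*a*b*c^2*k^3 + (24)*a*b*c*m^2*n^2 + (24)*a*b*c*m^2*k^2 + (36)*a*b*c*m*n^3*k + (36)*a*b*c*m*n*k^3 + (24)*a*b*c*n^2*k^2 + (-24)*a*b*m^2*n^2*k + (27)*a*c^5*n^3 + (-36)*a*c^4*m*n^2 + (-27)*a*c^4*n^3*k + (12)*a*c^3*m^2*n + (-12)*a*c^3*n*k^2 + (12)*a*c^2*m^2*n*k + (36)*a*c^2*m*n^2*k^2 + (12)*a*c^2*n*k^3 + (-24)*a*c*m^2*n*k^2 + (-81)*b^6*c^4 + (243)*b^6*c^3*k + (-243)*b^6*c^2*k^2 + (81)*b^6*c*k^3 + (243)*b^5*c^4*n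 + (-27)*b^5*c^3*m + (-567)*b^5*c^3*n*k + (27)*b^5*c^2*m*k + (405)*b^5*c^2*n*k^2 + (-36)*b^5*c^2*n + (27)*b^5*c*m*k^2 + (-81)*b^5*c*n*k^3 + (72)*b^5*c*n*k + (-27)*b^5*m*k^3 + (-36)*b^5*n*k^2 + (-81)*b^4*c^6 + (243)*b^4*c^5*k + (-243)*b^4*c^4*n^2 + (-243)*b^4*c^4*k^2 + (27)*b^4*c^3*m*n + (405)*b^4*c^3*n^2*k + (81)*b^4*c^3*k^3 + (-36)*b^4*c^3*k + (36)*b^4*c^2*m^2 + (27)*b^4*c^2*m*n*k + (-162)*b^4*c^2*n^2*k^2 + (72)*b^4*c^2*n^2 + (72)*b^4*c^2*k^2 + (-72)*b^4*c*m^2*k + (-81)*b^4*c*m*n*k^2 + (-24)*b^4*c*m*n + (-108)*b^4*c*n^2*k + (-36)*b^4*c*k^3 + (36)*b^4*m^2*k^2 + (27)*b^4*m*n*k^3 + (24)*b^4*m*n*k + (36)*b^4*n^2*k^2 + (243)*b^3*c^6*n + (-27)*b^3*c^5*m + (-567)*b^3*c^5*n*k + (27)*b^3*c^4*m*k + (81)*b^3*c^4*n^3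 + (405)*b^3*c^4*n*k^2 + (-36)*b^3*c^4*n + (-27)*b^3*c^3*m^3 + (27)*b^3*c^3*m*n^2 + (27)*b^3*c^3*m*k^2 + (-81)*b^3*c^3*n^3*k + (-81)*b^3*c^3*n*k^3 + (144)*b^3*c^3*n*k + (27)*b^3*c^2*m^3*k + (-36)*b^3*c^2*m^2*n + (-81)*b^3*c^2*m*n^2*k + (-27)*b^3*c^2*m*k^3 + (-24)*b^3*c^2*m*k + (-36)*b^3*c^2*n^3 + (-144)*b^3*c^2*n*k^2 + (12)*b^3*c*m^3 + (72)*b^3*c*m^2*n*k + (54)*b^3*c*m*n^2*k^2 + (12)*b^3*c*m*n^2 + (24)*b^3*c*m*k^2 + (36)*b^3*c*n^3*k + (36)*b^3*c*n*k^3 + (-12)*b^3*m^3*k + (-36)*b^3*m^2*n*k^2 + (-12)*b^3*m*n^2*k + (-243)*b^2*c^6*n^2 + (27)*b^2*c^5*m*n + (405)*b^2*c^5*n^2*k + (-36)*b^2*c^5*k + (36)*b^2*c^4*m^2 + (27)*b^2*c^4*m*n*k + (-162)*b^2*c^4*n^2*k^2 + (72)*b^2*c^4*n^2 + (72)*b^2*c^4*k^2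 + (27)*b^2*c^3*m^3*n + (-36)*b^2*c^3*m^2*k + (-27)*b^2*c^3*m*n^3 + (-81)*b^2*c^3*m*n*k^2 + (-24)*b^2*c^3*m*n + (-144)*b^2*c^3*n^2*k + (-36)*b^2*c^3*k^3 + (-27)*b^2*c^2*m^3*n*k + (27)*b^2*c^2*m*n^3*k + (27)*b^2*c^2*m*n*k^3 + (24)*b^2*c^2*m*n*k + (72)*b^2*c^2*n^2*k^2 + (-12)*b^2*c*m^3*n + (12)*b^2*c*m*n^3 + (12)*b^2*m^3*n*k + (-12)*b^2*m*n^3*k + (81)*b*c^6*n^3 + (27)*b*c^5*m*n^2 + (-81)*b*c^5*n^3*k + (72)*b*c^5*n*k + (-72)*b*c^4*m^2*n + (-81)*b*c^4*m*n^2*k + (-24)*b*c^4*m*k + (-36)*b*c^4*n^3 + (-108)*b*c^4*n*k^2 + (12)*b*c^3*m^3 + (72)*b*c^3*m^2*n*k + (54)*b*c^3*m*n^2*k^2 + (24)*b*c^3*m*n^2 + (12)*b*c^3*m*k^2 + (36)*b*c^3*n^3*k + (36)*b*c^3*n*k^3 + (-12)*b*c^2*m^3*k + (12)*b*c^2*m*k^3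 + (-24)*b*c*m*n^2*k^2 + (-27)*c^5*m*n^3 + (-36)*c^5*n^2*k + (36)*c^4*m^2*n^2 + (27)*c^4*m*n^3*k + (24)*c^4*m*n*k + (36)*c^4*n^2*k^2 + (-12)*c^3*m^3*n + (-36)*c^3*m^2*n^2*k + (-12)*c^3*m*n*k^2 + (12)*c^2*m^3*n*k + (-12)*c^2*m*n*k^3) * h2
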